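/- For every linear reservoir system R = (W, V, h) with input streams bounded by M > 0 and every ε > 0, there exists a Simple Multi-Cycle Reservoir R' = (W', V', h') (of some order k and some state dimension n') that is ε-close to R; moreover ‖W'‖ = ‖W‖ and h' is h with linearly transformed domain. -/

import Mathlib

/-- Operator norm of a complex matrix w.r.t. Euclidean norms. -/
noncomputable def opNorm {ι κ : Type*} [Fintype ι] [Fintype κ] [DecidableEq κ]
    (A : Matrix ι κ ℂ) : ℝ :=
  ‖LinearMap.toContinuousLinearMap (Matrix.toEuclideanLin A)‖

/-- The state of the linear reservoir system `(W, V, ·)` at time `t` on input stream `c`. -/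
noncomputable def resState {ι κ : Type*} [Fintype ι] [DecidableEq ι] [Fintype κ]
    (W : Matrix ι ι ℂ) (V : Matrix ι κ ℂ)
    (c : ℤ → EuclideanSpace ℂ κ) (t : ℤ) : EuclideanSpace ℂ ι :=
  ∑' k : ℕ, WithLp.toLp 2 (Matrix.mulVec (W ^ k * V) (c (t - k)))

/-- The permutation matrix associated to a permutation `σ` (entry `i j` is `1` iff `σ i = j`). -/
def permMatrix {ι : Type*} [DecidableEq ι] (σ : Equiv.Perm ι) : Matrix ι ι ℂ :=
  Matrix.of fun i j => if σ i = j then 1 else 0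

/-- A permutation is a full cycle iff it acts transitively. -/
def IsFullCycle {ι : Type*} (σ : Equiv.Perm ι) : Prop :=
  ∀ i j : ι, ∃ k : ℕ, (σ ^ k) i = j

def IsContractiveFullCycle {ι : Type*} [DecidableEq ι] (W : Matrix ι ι ℂ) : Prop :=
  ∃ (l : ℝ) (σ : Equiv.Perm ι), 0 < l ∧ l < 1 ∧ IsFullCycle σ ∧ W = (l : ℂ) • permMatrix σ

/-- Two linear reservoir systems are `ε`-close for input streams bounded by `Mb`. -/
def EpsClose {ι₁ ι₂ κ od : Type*} [Fintype ι₁] [DecidableEq ι₁] [Fintype ι₂] [DecidableEq ι₂]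
    [Fintype κ] [Fintype od] (Mb ε : ℝ)
    (W₁ : Matrix ι₁ ι₁ ℂ) (V₁ : Matrix ι₁ κ ℂ) (h₁ : EuclideanSpace ℂ ι₁ → EuclideanSpace ℂ od)
    (W₂ : Matrix ι₂ ι₂ ℂ) (V₂ : Matrix ι₂ κ ℂ) (h₂ : EuclideanSpace ℂ ι₂ → EuclideanSpace ℂ od) :
    Prop :=
  ∀ c : ℤ → EuclideanSpace ℂ κ, (∀ t : ℤ, t ≤ 0 → ‖c t‖ ≤ Mb) →
    ∀ t : ℤ, t ≤ 0 → ‖h₁ (resState W₁ V₁ c t) - h₂ (resState W₂ V₂ c t)‖ < ε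

/-- `h'` is `h` with linearly transformed domain. -/
def LinTransformedDomain {ι₁ ι₂ od : Type*} [Fintype ι₂]
    (h : EuclideanSpace ℂ ι₁ → EuclideanSpace ℂ od)
    (h' : EuclideanSpace ℂ ι₂ → EuclideanSpace ℂ od) : Prop :=
  ∃ A : Matrix ι₁ ι₂ ℂ, ∀ x : EuclideanSpace ℂ ι₂, h' x = h (WithLp.toLp 2 (Matrix.mulVec A x))

open Fin.NatCast Fin.CommRing

namespace SMCRaux
set_option linter.unusedSectionVars false
set_option linter.unnecessarySeqFocus false
variable {ι κ ν : Type*} [Fintype ι] [DecidableEq ι] [Fintype κ] [DecidableEq κ] [Fintype ν] [DecidableEq ν]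

noncomputable def mclm (A : Matrix ι κ ℂ) : EuclideanSpace ℂ κ →L[ℂ] EuclideanSpace ℂ ι :=
  LinearMap.toContinuousLinearMap (Matrix.toEuclideanLin A)

lemma mclm_apply (A : Matrix ι κ ℂ) (x : EuclideanSpace ℂ κ) :
    mclm A x = (WithLp.toLp 2 (A.mulVec x) : EuclideanSpace ℂ ι) := rfl

lemma opNorm_eq (A : Matrix ι κ ℂ) : opNorm A = ‖mclm A‖ := rfl

lemma norm_mclm_le (A : Matrix ι κ ℂ) (x : EuclideanSpace ℂ κ) :
    ‖mclm A x‖ ≤ opNorm A * ‖x‖ := (mclm A).le_opNorm x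

lemma mclm_mul (A : Matrix ι κ ℂ) (B : Matrix κ ν ℂ) :
    mclm (A * B) = (mclm A).comp (mclm B) := by
  ext x
  simp [mclm_apply, ContinuousLinearMap.comp_apply, Matrix.mulVec_mulVec]

lemma mclm_one : mclm (1 : Matrix ι ι ℂ) = ContinuousLinearMap.id ℂ _ := by
  ext x
  simp [mclm_apply, Matrix.one_mulVec]

lemma mclm_smul (z : ℂ) (A : Matrix ι κ ℂ) : mclm (z • A) = z • mclm A := by
  ext x
  simp [mclm, map_smul]

lemma opNorm_mul_le (A : Matrix ι κ ℂ) (B : Matrix κ ν ℂ) :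
    opNorm (A * B) ≤ opNorm A * opNorm B := by
  rw [opNorm_eq, opNorm_eq, opNorm_eq, mclm_mul]
  exact ContinuousLinearMap.opNorm_comp_le _ _

lemma opNorm_pow_le (A : Matrix ι ι ℂ) (k : ℕ) : opNorm (A ^ k) ≤ opNorm A ^ k := by
  induction k with
  | zero =>
      rw [pow_zero, pow_zero, opNorm_eq, mclm_one]
      exact ContinuousLinearMap.norm_id_le
  | succ k ih =>
      calc opNorm (A ^ (k+1)) = opNorm (A ^ k * A) := by rw [pow_succ]
      _ ≤ opNorm (A ^ k) * opNorm A := opNorm_mul_le _ _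
      _ ≤ opNorm A ^ k * opNorm A := mul_le_mul_of_nonneg_right ih (norm_nonneg _)
      _ = opNorm A ^ (k+1) := (pow_succ _ _).symm

lemma norm_mclm_term_le (Wa : Matrix ι ι ℂ) (Va : Matrix ι κ ℂ) (j : ℕ)
    (v : EuclideanSpace ℂ κ) :
    ‖mclm (Wa ^ j * Va) v‖ ≤ opNorm Wa ^ j * (opNorm Va * ‖v‖) := by
  calc ‖mclm (Wa ^ j * Va) v‖ ≤ opNorm (Wa ^ j * Va) * ‖v‖ := norm_mclm_le _ _
  _ ≤ (opNorm (Wa ^ j) * opNorm Va) * ‖v‖ :=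
      mul_le_mul_of_nonneg_right (opNorm_mul_le _ _) (norm_nonneg _)
  _ ≤ (opNorm Wa ^ j * opNorm Va) * ‖v‖ := by
      apply mul_le_mul_of_nonneg_right _ (norm_nonneg _)
      exact mul_le_mul_of_nonneg_right (opNorm_pow_le _ _) (norm_nonneg _)
  _ = opNorm Wa ^ j * (opNorm Va * ‖v‖) := by ring

lemma permMatrix_mulVec (α : Equiv.Perm ι) (v : ι → ℂ) :
    (permMatrix α).mulVec v = fun i => v (α i) := by
  funext i
  simp [permMatrix, Matrix.mulVec, dotProduct, ite_mul, Finset.sum_ite_eq]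

lemma permMatrix_mul_eq (α : Equiv.Perm ι) (D : Matrix ι ν ℂ) :
    permMatrix α * D = D.submatrix α _root_.id := by
  ext i q
  simp [permMatrix, Matrix.mul_apply, ite_mul, Finset.sum_ite_eq]

lemma permMatrix_pow (α : Equiv.Perm ι) (k : ℕ) :
    (permMatrix α) ^ k = permMatrix (α ^ k) := by
  induction k with
  | zero =>
      ext i j
      simp [permMatrix, Matrix.one_apply, eq_comm]
  | succ k ih =>
      rw [pow_succ, ih]
      ext i j
      simp only [permMatrix, Matrix.mul_apply, Matrix.of_apply, ite_mul, one_mul, zero_mul,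
        Finset.sum_ite_eq, Finset.mem_univ, if_true]
      have : (α ^ (k+1)) i = α ((α ^ k) i) := by
        rw [pow_succ']; rfl
      rw [this]

lemma opNorm_smul_permMatrix [Nonempty ι] (ρ : ℝ) (hρ : 0 ≤ ρ) (α : Equiv.Perm ι) :
    opNorm ((ρ : ℂ) • permMatrix α) = ρ := by
  rw [opNorm_eq]
  apply ContinuousLinearMap.homothety_norm
  intro x
  have hpt : ∀ i, mclm ((ρ:ℂ) • permMatrix α) x i = (ρ:ℂ) * x (α i) := by
    intro i
    have := congrArg (fun y => y i) (mclm_apply ((ρ:ℂ) • permMatrix α) x)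
    rw [this]
    show (((ρ:ℂ) • permMatrix α).mulVec x) i = _
    rw [Matrix.smul_mulVec, permMatrix_mulVec]
    simp
  rw [EuclideanSpace.norm_eq, EuclideanSpace.norm_eq]
  have hsum : ∑ i, ‖mclm ((ρ:ℂ) • permMatrix α) x i‖ ^ 2 = ρ^2 * ∑ i, ‖x i‖ ^ 2 := by
    rw [← Equiv.sum_comp α (fun i => ‖x i‖ ^ 2), Finset.mul_sum]
    refine Finset.sum_congr rfl fun i _ => ?_
    rw [hpt i, norm_mul, Complex.norm_real, Real.norm_eq_abs, abs_of_nonneg hρ]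
    ring
  rw [hsum, Real.sqrt_mul (by positivity), Real.sqrt_sq hρ]

lemma blockDiag_eq (k : ℕ) (σ : Equiv.Perm ι) (ρ : ℝ) :
    Matrix.blockDiagonal (fun _ : Fin k => (ρ:ℂ) • permMatrix σ)
      = (ρ:ℂ) • permMatrix (Equiv.prodCongr σ (Equiv.refl (Fin k))) := by
  ext ⟨i, c⟩ ⟨j, b⟩
  simp only [Matrix.blockDiagonal_apply, Matrix.smul_apply, permMatrix, Matrix.of_apply,
    Equiv.prodCongr_apply, Equiv.coe_refl, Prod.mk.injEq, Prod.map]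
  by_cases hc : c = b <;> by_cases hs : σ i = j <;> simp [hc, hs]

lemma jdx_arith (nb r : ℕ) (h : r < nb) : (nb - (nb - r) % nb) % nb = r := by
  rcases Nat.eq_zero_or_pos r with hr | hr
  · subst hr; simp [Nat.sub_zero, Nat.mod_self]
  · have h1 : (nb - r) % nb = nb - r := Nat.mod_eq_of_lt (by omega)
    rw [h1]
    have h2 : nb - (nb - r) = r := by omega
    rw [h2, Nat.mod_eq_of_lt h]

section core
variable (n m Nt : ℕ) (ρ : ℝ) (W : Matrix (Fin n) (Fin n) ℂ) (V : Matrix (Fin n) (Fin m) ℂ)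

noncomputable def Wc (r : ℕ) : Matrix (Fin n) (Fin m) ℂ := ((ρ:ℂ)⁻¹)^r • (W ^ r * V)

def jdx (i : Fin (Nt+1)) : ℕ := (Nt + 1 - (i:ℕ)) % (Nt + 1)

def tauP : Equiv.Perm (Fin (Nt+1) × Fin (m+1)) :=
  Equiv.prodCongr (finRotate (Nt+1)) (Equiv.refl _)

noncomputable def Amat : Matrix (Fin n) (Fin (Nt+1) × Fin (m+1)) ℂ :=
  fun p ic => Fin.cases ((1/2) * ∑ q, Wc n m ρ W V (jdx Nt ic.1) p q)
    (fun q' => -(1/2) * Wc n m ρ W V (jdx Nt ic.1) p q') ic.2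

def Vp : Matrix (Fin (Nt+1) × Fin (m+1)) (Fin m) ℂ :=
  fun ic q => if ic.1 = 0 ∧ ic.2 = q.succ then -1 else 1

lemma Vp_pm : ∀ (ic : Fin (Nt+1) × Fin (m+1)) (q : Fin m),
    Vp m Nt ic q = 1 ∨ Vp m Nt ic q = -1 := by
  intro ic q
  unfold Vp
  split <;> simp

lemma finRotate_pow (j : ℕ) (i : Fin (Nt+1)) :
    ((finRotate (Nt+1)) ^ j) i = i + (j : Fin (Nt+1)) := by
  induction j with
  | zero => simp
  | succ j ih =>
      rw [pow_succ', Equiv.Perm.mul_apply, ih, finRotate_succ_apply]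
      push_cast
      ring

lemma tauP_pow (j : ℕ) (i : Fin (Nt+1)) (c : Fin (m+1)) :
    ((tauP m Nt) ^ j) (i, c) = (i + (j : Fin (Nt+1)), c) := by
  induction j with
  | zero => simp
  | succ j ih =>
      rw [pow_succ', Equiv.Perm.mul_apply, ih]
      show (finRotate (Nt+1) (i + (j : Fin (Nt+1))), c) = _
      rw [finRotate_succ_apply]
      push_cast
      rw [add_assoc]

lemma jdx_neg (j : ℕ) : jdx Nt (-(j : Fin (Nt+1))) = j % (Nt + 1) := by
  unfold jdx
  rw [Fin.coe_neg, Fin.val_natCast]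
  exact jdx_arith (Nt+1) (j % (Nt+1)) (Nat.mod_lt _ (Nat.succ_pos _))

lemma core_identity (j : ℕ) :
    Amat n m Nt ρ W V * (permMatrix ((tauP m Nt) ^ j) * Vp m Nt)
      = Wc n m ρ W V (j % (Nt + 1)) := by
  rw [permMatrix_mul_eq]
  ext p q
  rw [Matrix.mul_apply, Fintype.sum_prod_type]
  set jF : Fin (Nt+1) := (j : Fin (Nt+1)) with hjF
  have hsub : ∀ (i : Fin (Nt+1)) (c : Fin (m+1)),
      (Vp m Nt).submatrix ((tauP m Nt)^j) _root_.id (i, c) q = Vp m Nt (i + jF, c) q := by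
    intro i c
    rw [Matrix.submatrix_apply, tauP_pow]
    rfl
  have inner : ∀ i : Fin (Nt+1),
      (∑ c, Amat n m Nt ρ W V p (i, c) * (Vp m Nt).submatrix ((tauP m Nt)^j) _root_.id (i, c) q)
        = if i + jF = 0 then Wc n m ρ W V (jdx Nt i) p q else 0 := by
    intro i
    have hrw : ∀ c, Amat n m Nt ρ W V p (i, c) * (Vp m Nt).submatrix ((tauP m Nt)^j) _root_.id (i, c) q
        = Amat n m Nt ρ W V p (i, c) * Vp m Nt (i + jF, c) q := fun c => by rw [hsub]
    rw [Finset.sum_congr rfl (fun c _ => hrw c), Fin.sum_univ_succ]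
    have hA0 : Amat n m Nt ρ W V p (i, 0) = (1/2) * ∑ q', Wc n m ρ W V (jdx Nt i) p q' := rfl
    have hAs : ∀ q' : Fin m, Amat n m Nt ρ W V p (i, q'.succ)
        = -(1/2) * Wc n m ρ W V (jdx Nt i) p q' := fun q' => rfl
    have hV0 : Vp m Nt (i + jF, (0 : Fin (m+1))) q = 1 := by
      unfold Vp
      simp [(Fin.succ_ne_zero q).symm]
    have hVs : ∀ q' : Fin m, Vp m Nt (i + jF, q'.succ) q
        = if i + jF = 0 ∧ q' = q then -1 else 1 := by
      intro q'
      unfold Vp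
      simp [Fin.succ_inj]
    rw [hA0, hV0]
    by_cases hP : i + jF = 0
    · have hterm : ∀ q', Amat n m Nt ρ W V p (i, q'.succ) * Vp m Nt (i + jF, q'.succ) q
          = -(1/2) * Wc n m ρ W V (jdx Nt i) p q'
            + (if q' = q then Wc n m ρ W V (jdx Nt i) p q' else 0) := by
        intro q'
        rw [hAs, hVs]
        by_cases h : q' = q <;> simp [h, hP] <;> ring
      rw [Finset.sum_congr rfl (fun q' _ => hterm q'), Finset.sum_add_distrib,
        Finset.sum_ite_eq' Finset.univ q]
      simp only [hP, if_true, Finset.mem_univ]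
      rw [← Finset.mul_sum]
      ring
    · have hterm : ∀ q', Amat n m Nt ρ W V p (i, q'.succ) * Vp m Nt (i + jF, q'.succ) q
          = -(1/2) * Wc n m ρ W V (jdx Nt i) p q' := by
        intro q'
        rw [hAs, hVs]
        simp [hP]
      rw [Finset.sum_congr rfl (fun q' _ => hterm q')]
      simp only [hP, if_false]
      rw [← Finset.mul_sum]
      ring
  rw [Finset.sum_congr rfl (fun i _ => inner i)]
  have hiff : ∀ i : Fin (Nt+1), (i + jF = 0) ↔ (i = -jF) := fun i => add_eq_zero_iff_eq_neg
  have : (∑ i : Fin (Nt+1), if i + jF = 0 then Wc n m ρ W V (jdx Nt i) p q else 0)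
      = ∑ i : Fin (Nt+1), if i = -jF then Wc n m ρ W V (jdx Nt i) p q else 0 := by
    refine Finset.sum_congr rfl fun i _ => ?_
    exact if_congr (hiff i) rfl rfl
  rw [this, Finset.sum_ite_eq' Finset.univ (-jF)]
  simp only [Finset.mem_univ, if_true]
  rw [hjF, jdx_neg]

end core
end SMCRaux

open SMCRaux in
theorem smcr_universal
    (n m d : ℕ) (W : Matrix (Fin n) (Fin n) ℂ) (hW : opNorm W < 1) (hW0 : 0 < opNorm W)
    (V : Matrix (Fin n) (Fin m) ℂ)
    (h : EuclideanSpace ℂ (Fin n) → EuclideanSpace ℂ (Fin d)) (hh : Continuous h)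
    (M : ℝ) (hM : 0 < M) (ε : ℝ) (hε : 0 < ε) :
    ∃ (k nb : ℕ), 0 < k ∧
      ∃ (B : Matrix (Fin nb) (Fin nb) ℂ) (V' : Matrix (Fin nb × Fin k) (Fin m) ℂ)
        (h' : EuclideanSpace ℂ (Fin nb × Fin k) → EuclideanSpace ℂ (Fin d)),
        IsContractiveFullCycle B ∧
        (∀ (i : Fin nb × Fin k) (j : Fin m), V' i j = 1 ∨ V' i j = -1) ∧
        opNorm (Matrix.blockDiagonal fun _ : Fin k => B) = opNorm W ∧
        Continuous h' ∧ LinTransformedDomain h h' ∧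
        EpsClose M ε W V h (Matrix.blockDiagonal fun _ : Fin k => B) V' h' := by
  classical
  obtain ⟨ρ, hρdef⟩ : ∃ x : ℝ, opNorm W = x := ⟨_, rfl⟩
  rw [hρdef] at hW hW0 ⊢
  have hρ0 : 0 < ρ := hW0
  have hρ1 : ρ < 1 := hW
  have hρC : (ρ : ℂ) ≠ 0 := by
    exact_mod_cast ne_of_gt hρ0
  have h1ρ : 0 < 1 - ρ := by linarith
  obtain ⟨nV, hnVdef⟩ : ∃ x : ℝ, opNorm V = x := ⟨_, rfl⟩
  have hnV0 : 0 ≤ nV := hnVdef ▸ norm_nonneg _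
  set R0 : ℝ := nV * M * (1 - ρ)⁻¹ with hR0
  -- uniform continuity of h on the relevant compact ball
  have hKc : IsCompact (Metric.closedBall (0 : EuclideanSpace ℂ (Fin n)) R0) :=
    isCompact_closedBall _ _
  have huc := hKc.uniformContinuousOn_of_continuous hh.continuousOn
  obtain ⟨δ, hδ0, Hδ⟩ := Metric.uniformContinuousOn_iff.mp huc ε hε
  -- choose the cycle length
  set C : ℝ := 2 * nV * M * (1 - ρ)⁻¹ with hCdef
  have hC0 : 0 ≤ C := by positivity
  have hCp1 : (0:ℝ) < C + 1 := by linarith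
  obtain ⟨Nt, hNt⟩ := exists_pow_lt_of_lt_one (div_pos hδ0 hCp1) hρ1
  have herr : C * ρ ^ (Nt + 1) < δ := by
    have h1 : ρ ^ (Nt + 1) ≤ ρ ^ Nt := pow_le_pow_of_le_one hρ0.le hρ1.le (Nat.le_succ _)
    have h2 : C * ρ ^ (Nt + 1) ≤ (C + 1) * ρ ^ Nt := by
      have := pow_nonneg hρ0.le (Nt + 1)
      nlinarith [pow_nonneg hρ0.le Nt]
    have h3 : (C + 1) * ρ ^ Nt < (C + 1) * (δ / (C + 1)) :=
      mul_lt_mul_of_pos_left hNt hCp1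
    rw [mul_div_cancel₀ _ (ne_of_gt hCp1)] at h3
    linarith
  -- the data
  set σc : Equiv.Perm (Fin (Nt + 1)) := finRotate (Nt + 1) with hσc
  set B : Matrix (Fin (Nt + 1)) (Fin (Nt + 1)) ℂ := (ρ : ℂ) • permMatrix σc with hB
  set A : Matrix (Fin n) (Fin (Nt + 1) × Fin (m + 1)) ℂ := Amat n m Nt ρ W V with hA
  set Vp' : Matrix (Fin (Nt + 1) × Fin (m + 1)) (Fin m) ℂ := Vp m Nt with hVp
  set W' : Matrix (Fin (Nt + 1) × Fin (m + 1)) (Fin (Nt + 1) × Fin (m + 1)) ℂ :=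
    Matrix.blockDiagonal (fun _ : Fin (m + 1) => B) with hW'
  have hW'eq : W' = (ρ : ℂ) • permMatrix (tauP m Nt) := by
    rw [hW', hB, blockDiag_eq]
    rfl
  have hW'norm : opNorm W' = ρ := by
    rw [hW'eq]
    exact opNorm_smul_permMatrix ρ hρ0.le _
  obtain ⟨nVp, hnVpdef⟩ : ∃ x : ℝ, opNorm Vp' = x := ⟨_, rfl⟩
  have hnVp0 : 0 ≤ nVp := hnVpdef ▸ norm_nonneg _
  -- the key algebraic identity
  have hT : ∀ j : ℕ, A * (W' ^ j * Vp')
      = (ρ : ℂ) ^ j • Wc n m ρ W V (j % (Nt + 1)) := by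
    intro j
    rw [hW'eq, smul_pow, permMatrix_pow, Matrix.smul_mul, Matrix.mul_smul,
      ← core_identity n m Nt ρ W V j]
  refine ⟨m + 1, Nt + 1, Nat.succ_pos _, B, Vp', fun x => h (WithLp.toLp 2 (A.mulVec x)),
    ⟨ρ, σc, hρ0, hρ1, ?_, rfl⟩, Vp_pm m Nt, ?_, ?_, ⟨A, fun x => rfl⟩, ?_⟩
  · -- full cycle
    intro i j
    refine ⟨((j - i : Fin (Nt + 1)) : ℕ), ?_⟩
    rw [hσc, finRotate_pow, Fin.cast_val_eq_self]
    ring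
  · -- operator norm
    exact hW'norm
  · -- continuity
    exact hh.comp (mclm A).continuous
  · -- eps-closeness
    intro c hc t ht
    have hu : ∀ j : ℕ, ‖c (t - (j : ℤ))‖ ≤ M := fun j => hc _ (by omega)
    have hgeo : Summable (fun j : ℕ => ρ ^ j) := summable_geometric_of_lt_one hρ0.le hρ1
    have hgeo_sum : ∑' j : ℕ, ρ ^ j = (1 - ρ)⁻¹ := tsum_geometric_of_lt_one hρ0.le hρ1
    -- the two series
    set f1 : ℕ → EuclideanSpace ℂ (Fin n) := fun j => mclm (W ^ j * V) (c (t - j)) with hf1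
    set f2 : ℕ → EuclideanSpace ℂ (Fin (Nt + 1) × Fin (m + 1)) :=
      fun j => mclm (W' ^ j * Vp') (c (t - j)) with hf2
    set g : ℕ → EuclideanSpace ℂ (Fin n) :=
      fun j => mclm ((ρ : ℂ) ^ j • Wc n m ρ W V (j % (Nt + 1))) (c (t - j)) with hg
    have hb1 : ∀ j, ‖f1 j‖ ≤ ρ ^ j * (nV * M) := by
      intro j
      calc ‖f1 j‖ ≤ ρ ^ j * (nV * ‖c (t - j)‖) := by
              have h9 := norm_mclm_term_le W V j (c (t - j))
              rwa [hρdef, hnVdef] at h9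
      _ ≤ ρ ^ j * (nV * M) := mul_le_mul_of_nonneg_left
            (mul_le_mul_of_nonneg_left (hu j) hnV0) (pow_nonneg hρ0.le j)
    have hb2 : ∀ j, ‖f2 j‖ ≤ ρ ^ j * (nVp * M) := by
      intro j
      calc ‖f2 j‖ ≤ ρ ^ j * (nVp * ‖c (t - j)‖) := by
              have h9 := norm_mclm_term_le W' Vp' j (c (t - j))
              rwa [hW'norm, hnVpdef] at h9
      _ ≤ ρ ^ j * (nVp * M) := mul_le_mul_of_nonneg_left
            (mul_le_mul_of_nonneg_left (hu j) hnVp0) (pow_nonneg hρ0.le j)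
    have hbg : ∀ j, ‖g j‖ ≤ ρ ^ j * (nV * M) := by
      intro j
      set r : ℕ := j % (Nt + 1) with hr
      have hsm : (ρ : ℂ) ^ j • Wc n m ρ W V r = (((ρ ^ j * (ρ⁻¹) ^ r : ℝ)) : ℂ) • (W ^ r * V) := by
        rw [Wc, smul_smul]
        push_cast
        ring_nf
      have hnn : (0:ℝ) ≤ ρ ^ j * (ρ⁻¹) ^ r :=
        mul_nonneg (pow_nonneg hρ0.le j) (pow_nonneg (inv_nonneg.mpr hρ0.le) r)
      have : ‖g j‖ = (ρ ^ j * (ρ⁻¹) ^ r) * ‖mclm (W ^ r * V) (c (t - j))‖ := by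
        simp only [hg]
        rw [hsm, mclm_smul, ContinuousLinearMap.smul_apply, norm_smul, Complex.norm_real,
          Real.norm_eq_abs, abs_of_nonneg hnn]
      rw [this]
      have hle : ‖mclm (W ^ r * V) (c (t - j))‖ ≤ ρ ^ r * (nV * M) := by
        calc ‖mclm (W ^ r * V) (c (t - j))‖ ≤ ρ ^ r * (nV * ‖c (t - j)‖) := by
              have h9 := norm_mclm_term_le W V r (c (t - j))
              rwa [hρdef, hnVdef] at h9
        _ ≤ ρ ^ r * (nV * M) := mul_le_mul_of_nonneg_left
            (mul_le_mul_of_nonneg_left (hu j) hnV0) (pow_nonneg hρ0.le r)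
      have hinv : (ρ⁻¹) ^ r * ρ ^ r = 1 := by
        rw [← mul_pow, inv_mul_cancel₀ (ne_of_gt hρ0), one_pow]
      calc (ρ ^ j * (ρ⁻¹) ^ r) * ‖mclm (W ^ r * V) (c (t - j))‖
          ≤ (ρ ^ j * (ρ⁻¹) ^ r) * (ρ ^ r * (nV * M)) := by
            exact mul_le_mul_of_nonneg_left hle hnn
      _ = ρ ^ j * (nV * M) * ((ρ⁻¹) ^ r * ρ ^ r) := by ring
      _ = ρ ^ j * (nV * M) := by rw [hinv, mul_one]
    have hS1 : Summable f1 := Summable.of_norm_bounded (hgeo.mul_right (nV * M)) hb1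
    have hS2 : Summable f2 := Summable.of_norm_bounded (hgeo.mul_right (nVp * M)) hb2
    have hSg : Summable g := Summable.of_norm_bounded (hgeo.mul_right (nV * M)) hbg
    have hres1 : resState W V c t = ∑' j, f1 j := tsum_congr fun j => rfl
    have hres2 : resState W' Vp' c t = ∑' j, f2 j := tsum_congr fun j => rfl
    have hAx : mclm A (resState W' Vp' c t) = ∑' j, g j := by
      rw [hres2, ContinuousLinearMap.map_tsum _ hS2]
      refine tsum_congr fun j => ?_
      simp only [hf2]
      rw [← ContinuousLinearMap.comp_apply, ← mclm_mul, hT j]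
    -- the difference series
    set dd : ℕ → EuclideanSpace ℂ (Fin n) := fun j => g j - f1 j with hdd
    have hSd : Summable dd := hSg.sub hS1
    have hd0 : ∀ j, j < Nt + 1 → dd j = 0 := by
      intro j hj
      have hmod : j % (Nt + 1) = j := Nat.mod_eq_of_lt hj
      have : (ρ : ℂ) ^ j • Wc n m ρ W V (j % (Nt + 1)) = W ^ j * V := by
        rw [hmod, Wc, smul_smul, ← mul_pow, mul_inv_cancel₀ hρC, one_pow, one_smul]
      simp only [hdd, hg, hf1]
      rw [this, sub_self]
    have hdb : ∀ j, ‖dd j‖ ≤ ρ ^ j * (2 * (nV * M)) := by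
      intro j
      calc ‖dd j‖ ≤ ‖g j‖ + ‖f1 j‖ := norm_sub_le _ _
      _ ≤ ρ ^ j * (nV * M) + ρ ^ j * (nV * M) := add_le_add (hbg j) (hb1 j)
      _ = ρ ^ j * (2 * (nV * M)) := by ring
    have hdiff : mclm A (resState W' Vp' c t) - resState W V c t = ∑' j, dd j := by
      rw [hAx, hres1, hSg.tsum_sub hS1]
    have hshift : Summable fun i : ℕ => dd (i + (Nt + 1)) :=
      (summable_nat_add_iff (Nt + 1)).mpr hSd
    have htail : ∑' j, dd j = ∑' i, dd (i + (Nt + 1)) := by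
      rw [← Summable.sum_add_tsum_nat_add' hshift]
      rw [Finset.sum_eq_zero fun i hi => hd0 i (Finset.mem_range.mp hi), zero_add]
    have hbt : ∀ i : ℕ, ‖dd (i + (Nt + 1))‖ ≤ (2 * (nV * M) * ρ ^ (Nt + 1)) * ρ ^ i := by
      intro i
      calc ‖dd (i + (Nt + 1))‖ ≤ ρ ^ (i + (Nt + 1)) * (2 * (nV * M)) := hdb _
      _ = (2 * (nV * M) * ρ ^ (Nt + 1)) * ρ ^ i := by rw [pow_add]; ring
    have hSbt : Summable fun i : ℕ => ‖dd (i + (Nt + 1))‖ :=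
      Summable.of_nonneg_of_le (fun i => norm_nonneg _) hbt
        (hgeo.mul_left (2 * (nV * M) * ρ ^ (Nt + 1)))
    have hnormtail : ‖∑' i : ℕ, dd (i + (Nt + 1))‖ ≤ C * ρ ^ (Nt + 1) := by
      calc ‖∑' i : ℕ, dd (i + (Nt + 1))‖ ≤ ∑' i : ℕ, ‖dd (i + (Nt + 1))‖ :=
          norm_tsum_le_tsum_norm hSbt
      _ ≤ ∑' i : ℕ, (2 * (nV * M) * ρ ^ (Nt + 1)) * ρ ^ i :=
          Summable.tsum_le_tsum hbt hSbt (hgeo.mul_left _)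
      _ = (2 * (nV * M) * ρ ^ (Nt + 1)) * (1 - ρ)⁻¹ := by
          rw [tsum_mul_left, hgeo_sum]
      _ = C * ρ ^ (Nt + 1) := by rw [hCdef]; ring
    have hdistsmall : ‖mclm A (resState W' Vp' c t) - resState W V c t‖ < δ := by
      rw [hdiff, htail]
      exact lt_of_le_of_lt hnormtail herr
    -- both states in the ball
    have hxball : resState W V c t ∈ Metric.closedBall (0 : EuclideanSpace ℂ (Fin n)) R0 := by
      rw [Metric.mem_closedBall, dist_zero_right, hres1]
      calc ‖∑' j, f1 j‖ ≤ ∑' j, ρ ^ j * (nV * M) := by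
            refine norm_tsum_le_tsum_norm ?_ |>.trans (Summable.tsum_le_tsum hb1 ?_ (hgeo.mul_right _))
            · exact Summable.of_nonneg_of_le (fun i => norm_nonneg _) hb1 (hgeo.mul_right _)
            · exact Summable.of_nonneg_of_le (fun i => norm_nonneg _) hb1 (hgeo.mul_right _)
      _ = R0 := by rw [tsum_mul_right, hgeo_sum, hR0]; ring
    have hyball : mclm A (resState W' Vp' c t)
        ∈ Metric.closedBall (0 : EuclideanSpace ℂ (Fin n)) R0 := by
      rw [Metric.mem_closedBall, dist_zero_right, hAx]
      calc ‖∑' j, g j‖ ≤ ∑' j, ρ ^ j * (nV * M) := by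
            refine norm_tsum_le_tsum_norm ?_ |>.trans (Summable.tsum_le_tsum hbg ?_ (hgeo.mul_right _))
            · exact Summable.of_nonneg_of_le (fun i => norm_nonneg _) hbg (hgeo.mul_right _)
            · exact Summable.of_nonneg_of_le (fun i => norm_nonneg _) hbg (hgeo.mul_right _)
      _ = R0 := by rw [tsum_mul_right, hgeo_sum, hR0]; ring
    -- conclude
    have : ‖h (resState W V c t) - h (mclm A (resState W' Vp' c t))‖ < ε := by
      rw [← dist_eq_norm]
      refine Hδ _ hxball _ hyball ?_
      rw [dist_eq_norm, norm_sub_rev]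
      exact hdistsmall
    exact this
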